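/- Let N and M be unimodular integral lattices and φ : N ⊕ M(2) → N(2) ⊕ M the map n ⊕ m ↦ n ⊕ 2m. Then the map Φ : O(N(2) ⊕ M) → O(N ⊕ M(2)) defined by f ↦ φ⁻¹ ∘ f ∘ φ is a well-defined group isomorphism. -/

import Mathlib

/-- The group of isometries of a `ℤ`-valued pairing `b` on `L`, as a subgroup of
the group of `ℤ`-linear automorphisms of `L`. -/
def isomGroup {L : Type*} [AddCommGroup L] [Module ℤ L] (b : L → L → ℤ) :
    Subgroup (L ≃ₗ[ℤ] L) where
  carrier := {f | ∀ x y, b (f x) (f y) = b x y}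
  one_mem' := by intro x y; rfl
  mul_mem' := by
    intro f g hf hg x y
    have : ∀ z, (f * g) z = f (g z) := fun z => rfl
    rw [this, this, hf, hg]
  inv_mem' := by
    intro f hf x y
    have h1 : b x y = b (f (f⁻¹ x)) (f (f⁻¹ y)) := by
      rw [show f (f⁻¹ x) = x from f.apply_symm_apply x,
        show f (f⁻¹ y) = y from f.apply_symm_apply y]
    rw [h1, hf]

def AddMonoidHom.toLinearMap' {X Y : Type*} [AddCommGroup X] [Module ℤ X] [AddCommGroup Y]
    [Module ℤ Y] (h : X →+ Y) : X →ₗ[ℤ] Y where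
  toFun := h
  map_add' := h.map_add
  map_smul' := fun c x => by
    have e1 := Int.cast_smul_eq_zsmul ℤ c x
    have e2 := Int.cast_smul_eq_zsmul ℤ c (h x)
    simp only [Int.cast_id] at e1 e2
    simp only [RingHom.id_apply]
    rw [e1, e2, map_zsmul]

lemma half_of_unimodular {B : Type*} [AddCommGroup B] [Module ℤ B]
    (bB : LinearMap.BilinForm ℤ B) (hB : Function.Bijective fun x => bB x)
    (s : B) (hs : ∀ m, 2 ∣ bB s m) : ∃ t : B, t + t = s := by
  have h2 : ∀ m, 2 * (bB s m / 2) = bB s m := fun m => Int.mul_ediv_cancel' (hs m)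
  have two : (2 : ℤ) ≠ 0 := two_ne_zero
  let ψ : B →ₗ[ℤ] ℤ :=
    (AddMonoidHom.mk' (fun m => bB s m / 2) (by
      intro a b
      apply mul_left_cancel₀ two
      show 2 * (bB s (a + b) / 2) = 2 * (bB s a / 2 + bB s b / 2)
      rw [h2, map_add, mul_add, h2, h2])).toLinearMap'
  obtain ⟨t, ht⟩ := hB.2 ψ
  have ht' : bB t = ψ := ht
  refine ⟨t, hB.1 ?_⟩
  show bB (t + t) = bB s
  apply LinearMap.ext; intro m
  simp only [map_add, LinearMap.add_apply, ht']
  show bB s m / 2 + bB s m / 2 = bB s m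
  have := h2 m; omega

lemma add_self_inj_of_unimodular {B : Type*} [AddCommGroup B] [Module ℤ B]
    (bB : LinearMap.BilinForm ℤ B) (hB : Function.Bijective fun x => bB x)
    {t t' : B} (h : t + t = t' + t') : t = t' := by
  apply hB.1
  show bB t = bB t'
  apply LinearMap.ext; intro m
  have h1 : bB (t + t) m = bB (t' + t') m := by rw [h]
  simp only [map_add, LinearMap.add_apply] at h1
  omega

lemma conjA {A B : Type*} [AddCommGroup A] [Module ℤ A] [AddCommGroup B] [Module ℤ B]
    (bA : LinearMap.BilinForm ℤ A) (bB : LinearMap.BilinForm ℤ B)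
    (hB : Function.Bijective fun x => bB x) :
    ∃ Φ : isomGroup (fun x y : A × B => 2 * bA x.1 y.1 + bB x.2 y.2) →*
          isomGroup (fun x y : A × B => bA x.1 y.1 + 2 * bB x.2 y.2),
      ∀ f x, ((Φ f).1 x).1 = (f.1 (x.1, x.2 + x.2)).1 ∧
             ((Φ f).1 x).2 + ((Φ f).1 x).2 = (f.1 (x.1, x.2 + x.2)).2 := by
  classical
  set G₂ := isomGroup (fun x y : A × B => 2 * bA x.1 y.1 + bB x.2 y.2) with hG₂
  let φ₀ : A × B → A × B := fun x => (x.1, x.2 + x.2)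
  have φinj : ∀ u v : A × B, φ₀ u = φ₀ v → u = v := by
    intro u v h
    simp only [φ₀, Prod.mk.injEq] at h
    exact Prod.ext h.1 (add_self_inj_of_unimodular bB hB h.2)
  have hinvap : ∀ (f : ↥G₂) (z : A × B), f.1 ((f⁻¹).1 z) = z := by
    intro f z
    calc f.1 ((f⁻¹).1 z) = ((f * f⁻¹ : ↥G₂)).1 z := rfl
      _ = ((1 : ↥G₂)).1 z := by rw [mul_inv_cancel]
      _ = z := rfl
  have hhalf : ∀ (f : ↥G₂) (x : A × B), ∃ t : B, t + t = (f.1 (φ₀ x)).2 := by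
    intro f x
    apply half_of_unimodular bB hB
    intro m
    have hf : ∀ a b : A × B, 2 * bA (f.1 a).1 (f.1 b).1 + bB (f.1 a).2 (f.1 b).2 =
        2 * bA a.1 b.1 + bB a.2 b.2 := f.2
    have h1 := hf (φ₀ x) ((f⁻¹).1 ((0 : A), m))
    rw [hinvap f ((0 : A), m)] at h1
    simp only [φ₀, map_zero, mul_zero, map_add, LinearMap.add_apply] at h1
    exact ⟨bA x.1 ((f⁻¹).1 ((0 : A), m)).1 + bB x.2 ((f⁻¹).1 ((0 : A), m)).2, by linarith⟩
  let F : ↥G₂ → (A × B) → (A × B) := fun f x =>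
    ((f.1 (φ₀ x)).1, Classical.choose (hhalf f x))
  have hkey : ∀ f x, φ₀ (F f x) = f.1 (φ₀ x) :=
    fun f x => Prod.ext rfl (Classical.choose_spec (hhalf f x))
  have φadd : ∀ u v, φ₀ (u + v) = φ₀ u + φ₀ v := by
    intro u v
    refine Prod.ext rfl ?_
    show (u.2 + v.2) + (u.2 + v.2) = (u.2 + u.2) + (v.2 + v.2)
    abel
  have Fadd : ∀ f u v, F f (u + v) = F f u + F f v := by
    intro f u v
    apply φinj
    rw [hkey, φadd, map_add, ← hkey, ← hkey, φadd]
  have Fcomp : ∀ (f g : ↥G₂) x, F f (F g x) = F (f * g) x := by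
    intro f g x
    apply φinj
    rw [hkey, hkey, hkey]
    rfl
  have Fone : ∀ x, F (1 : ↥G₂) x = x := by
    intro x
    apply φinj
    rw [hkey]
    rfl
  have Finv : ∀ (f : ↥G₂) x, F f (F f⁻¹ x) = x := by
    intro f x
    rw [Fcomp, mul_inv_cancel]; exact Fone x
  have Finv' : ∀ (f : ↥G₂) x, F f⁻¹ (F f x) = x := by
    intro f x
    rw [Fcomp, inv_mul_cancel]; exact Fone x
  let Flin : ↥G₂ → (A × B) →ₗ[ℤ] (A × B) := fun f =>
    (AddMonoidHom.mk' (F f) (Fadd f)).toLinearMap'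
  let Feq : ↥G₂ → (A × B) ≃ₗ[ℤ] (A × B) := fun f =>
    LinearEquiv.ofLinear (Flin f) (Flin f⁻¹)
      (LinearMap.ext fun x => Finv f x) (LinearMap.ext fun x => Finv' f x)
  have Fmem : ∀ f : ↥G₂, Feq f ∈ isomGroup (fun x y : A × B => bA x.1 y.1 + 2 * bB x.2 y.2) := by
    intro f
    show ∀ x y, bA (F f x).1 (F f y).1 + 2 * bB (F f x).2 (F f y).2 =
      bA x.1 y.1 + 2 * bB x.2 y.2
    intro x y
    have hf : ∀ a b : A × B, 2 * bA (f.1 a).1 (f.1 b).1 + bB (f.1 a).2 (f.1 b).2 =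
        2 * bA a.1 b.1 + bB a.2 b.2 := f.2
    have h1 := hf (φ₀ x) (φ₀ y)
    rw [← hkey, ← hkey] at h1
    simp only [φ₀, map_add, LinearMap.add_apply] at h1
    linarith
  let Φfun : ↥G₂ → ↥(isomGroup (fun x y : A × B => bA x.1 y.1 + 2 * bB x.2 y.2)) :=
    fun f => ⟨Feq f, Fmem f⟩
  have Φmul : ∀ f g, Φfun (f * g) = Φfun f * Φfun g := by
    intro f g
    apply Subtype.ext
    apply LinearEquiv.toLinearMap_injective
    apply LinearMap.ext
    intro x
    exact (Fcomp f g x).symm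
  refine ⟨MonoidHom.mk' Φfun Φmul, ?_⟩
  intro f x
  exact ⟨rfl, Classical.choose_spec (hhalf f x)⟩

lemma conjB {A B : Type*} [AddCommGroup A] [Module ℤ A] [AddCommGroup B] [Module ℤ B]
    (bA : LinearMap.BilinForm ℤ A) (bB : LinearMap.BilinForm ℤ B)
    (hA : Function.Bijective fun x => bA x) :
    ∃ Ψ : isomGroup (fun x y : A × B => bA x.1 y.1 + 2 * bB x.2 y.2) →*
          isomGroup (fun x y : A × B => 2 * bA x.1 y.1 + bB x.2 y.2),
      ∀ g x, ((Ψ g).1 x).1 + ((Ψ g).1 x).1 = (g.1 (x.1 + x.1, x.2)).1 ∧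
             ((Ψ g).1 x).2 = (g.1 (x.1 + x.1, x.2)).2 := by
  classical
  set G₁ := isomGroup (fun x y : A × B => bA x.1 y.1 + 2 * bB x.2 y.2) with hG₁
  let φ₀ : A × B → A × B := fun x => (x.1 + x.1, x.2)
  have φinj : ∀ u v : A × B, φ₀ u = φ₀ v → u = v := by
    intro u v h
    simp only [φ₀, Prod.mk.injEq] at h
    exact Prod.ext (add_self_inj_of_unimodular bA hA h.1) h.2
  have hinvap : ∀ (f : ↥G₁) (z : A × B), f.1 ((f⁻¹).1 z) = z := by
    intro f z
    calc f.1 ((f⁻¹).1 z) = ((f * f⁻¹ : ↥G₁)).1 z := rfl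
      _ = ((1 : ↥G₁)).1 z := by rw [mul_inv_cancel]
      _ = z := rfl
  have hhalf : ∀ (f : ↥G₁) (x : A × B), ∃ t : A, t + t = (f.1 (φ₀ x)).1 := by
    intro f x
    apply half_of_unimodular bA hA
    intro m
    have hf : ∀ a b : A × B, bA (f.1 a).1 (f.1 b).1 + 2 * bB (f.1 a).2 (f.1 b).2 =
        bA a.1 b.1 + 2 * bB a.2 b.2 := f.2
    have h1 := hf (φ₀ x) ((f⁻¹).1 (m, (0 : B)))
    rw [hinvap f (m, (0 : B))] at h1
    simp only [φ₀, map_zero, mul_zero, map_add, LinearMap.add_apply] at h1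
    exact ⟨bA x.1 ((f⁻¹).1 (m, (0 : B))).1 + bB x.2 ((f⁻¹).1 (m, (0 : B))).2, by linarith⟩
  let F : ↥G₁ → (A × B) → (A × B) := fun f x =>
    (Classical.choose (hhalf f x), (f.1 (φ₀ x)).2)
  have hkey : ∀ f x, φ₀ (F f x) = f.1 (φ₀ x) :=
    fun f x => Prod.ext (Classical.choose_spec (hhalf f x)) rfl
  have φadd : ∀ u v, φ₀ (u + v) = φ₀ u + φ₀ v := by
    intro u v
    refine Prod.ext ?_ rfl
    show (u.1 + v.1) + (u.1 + v.1) = (u.1 + u.1) + (v.1 + v.1)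
    abel
  have Fadd : ∀ f u v, F f (u + v) = F f u + F f v := by
    intro f u v
    apply φinj
    rw [hkey, φadd, map_add, ← hkey, ← hkey, φadd]
  have Fcomp : ∀ (f g : ↥G₁) x, F f (F g x) = F (f * g) x := by
    intro f g x
    apply φinj
    rw [hkey, hkey, hkey]
    rfl
  have Fone : ∀ x, F (1 : ↥G₁) x = x := by
    intro x
    apply φinj
    rw [hkey]
    rfl
  have Finv : ∀ (f : ↥G₁) x, F f (F f⁻¹ x) = x := by
    intro f x
    rw [Fcomp, mul_inv_cancel]; exact Fone x
  have Finv' : ∀ (f : ↥G₁) x, F f⁻¹ (F f x) = x := by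
    intro f x
    rw [Fcomp, inv_mul_cancel]; exact Fone x
  let Flin : ↥G₁ → (A × B) →ₗ[ℤ] (A × B) := fun f =>
    (AddMonoidHom.mk' (F f) (Fadd f)).toLinearMap'
  let Feq : ↥G₁ → (A × B) ≃ₗ[ℤ] (A × B) := fun f =>
    LinearEquiv.ofLinear (Flin f) (Flin f⁻¹)
      (LinearMap.ext fun x => Finv f x) (LinearMap.ext fun x => Finv' f x)
  have Fmem : ∀ f : ↥G₁, Feq f ∈ isomGroup (fun x y : A × B => 2 * bA x.1 y.1 + bB x.2 y.2) := by
    intro f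
    show ∀ x y, 2 * bA (F f x).1 (F f y).1 + bB (F f x).2 (F f y).2 =
      2 * bA x.1 y.1 + bB x.2 y.2
    intro x y
    have hf : ∀ a b : A × B, bA (f.1 a).1 (f.1 b).1 + 2 * bB (f.1 a).2 (f.1 b).2 =
        bA a.1 b.1 + 2 * bB a.2 b.2 := f.2
    have h1 := hf (φ₀ x) (φ₀ y)
    rw [← hkey, ← hkey] at h1
    simp only [φ₀, map_add, LinearMap.add_apply] at h1
    linarith
  let Φfun : ↥G₁ → ↥(isomGroup (fun x y : A × B => 2 * bA x.1 y.1 + bB x.2 y.2)) :=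
    fun f => ⟨Feq f, Fmem f⟩
  have Φmul : ∀ f g, Φfun (f * g) = Φfun f * Φfun g := by
    intro f g
    apply Subtype.ext
    apply LinearEquiv.toLinearMap_injective
    apply LinearMap.ext
    intro x
    exact (Fcomp f g x).symm
  refine ⟨MonoidHom.mk' Φfun Φmul, ?_⟩
  intro f x
  exact ⟨Classical.choose_spec (hhalf f x), rfl⟩

/-- **The twist map induces an isomorphism of isometry groups.** For unimodular integral
lattices `N`, `M` and `φ : N ⊕ M(2) → N(2) ⊕ M`, `n ⊕ m ↦ n ⊕ 2m`, conjugation by `φ`,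
`f ↦ φ⁻¹ ∘ f ∘ φ`, is a well-defined group isomorphism `O(N(2) ⊕ M) ≃ O(N ⊕ M(2))`:
there is a group isomorphism `Φ` between the isometry groups satisfying
`φ (Φ f x) = f (φ x)` for all `f` and `x`. -/
theorem twist_map_conjugation_isomorphism
    (N M : Type*) [AddCommGroup N] [Module ℤ N] [AddCommGroup M] [Module ℤ M]
    [Module.Free ℤ N] [Module.Finite ℤ N] [Module.Free ℤ M] [Module.Finite ℤ M]
    (bN : LinearMap.BilinForm ℤ N) (bM : LinearMap.BilinForm ℤ M)
    (hNsymm : ∀ x y, bN x y = bN y x) (hMsymm : ∀ x y, bM x y = bM y x)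
    (hNuni : Function.Bijective fun x => bN x)
    (hMuni : Function.Bijective fun x => bM x)
    (φ : N × M → N × M) (hφ : ∀ p : N × M, φ p = (p.1, (2 : ℤ) • p.2)) :
    ∃ Φ : isomGroup (fun x y : N × M => 2 * bN x.1 y.1 + bM x.2 y.2) ≃*
          isomGroup (fun x y : N × M => bN x.1 y.1 + 2 * bM x.2 y.2),
      ∀ (f : isomGroup (fun x y : N × M => 2 * bN x.1 y.1 + bM x.2 y.2)) (x : N × M),
        φ ((Φ f).1 x) = f.1 (φ x) := by
  obtain ⟨Φh, hΦ⟩ := conjA bN bM hMuni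
  obtain ⟨Ψh, hΨ⟩ := conjB bN bM hNuni
  have dblinj : ∀ u v : N × M, u + u = v + v → u = v := by
    intro u v h
    have h1 := congrArg Prod.fst h
    have h2 := congrArg Prod.snd h
    simp only [Prod.fst_add, Prod.snd_add] at h1 h2
    exact Prod.ext (add_self_inj_of_unimodular bN hNuni h1)
      (add_self_inj_of_unimodular bM hMuni h2)
  have left : Function.LeftInverse Ψh Φh := by
    intro f
    apply Subtype.ext
    apply LinearEquiv.toLinearMap_injective
    apply LinearMap.ext
    intro x
    show (Ψh (Φh f)).1 x = f.1 x
    apply dblinj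
    obtain ⟨hΨ1, hΨ2⟩ := hΨ (Φh f) x
    obtain ⟨hΦ1, hΦ2⟩ := hΦ f (x.1 + x.1, x.2)
    have hxx : ((x.1 + x.1 : N), x.2 + x.2) = x + x := rfl
    rw [hxx] at hΦ1 hΦ2
    rw [map_add] at hΦ1 hΦ2
    apply Prod.ext
    · show ((Ψh (Φh f)).1 x + (Ψh (Φh f)).1 x).1 = (f.1 x + f.1 x).1
      simp only [Prod.fst_add]
      rw [hΨ1, hΦ1]
      simp [Prod.fst_add]
    · show ((Ψh (Φh f)).1 x + (Ψh (Φh f)).1 x).2 = (f.1 x + f.1 x).2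
      simp only [Prod.snd_add]
      rw [hΨ2, hΦ2]
      simp [Prod.snd_add]
  have right : Function.RightInverse Ψh Φh := by
    intro g
    apply Subtype.ext
    apply LinearEquiv.toLinearMap_injective
    apply LinearMap.ext
    intro x
    show (Φh (Ψh g)).1 x = g.1 x
    apply dblinj
    obtain ⟨hΦ1, hΦ2⟩ := hΦ (Ψh g) x
    obtain ⟨hΨ1, hΨ2⟩ := hΨ g (x.1, x.2 + x.2)
    have hxx : ((x.1 + x.1 : N), x.2 + x.2) = x + x := rfl
    rw [hxx] at hΨ1 hΨ2
    rw [map_add] at hΨ1 hΨ2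
    apply Prod.ext
    · show ((Φh (Ψh g)).1 x + (Φh (Ψh g)).1 x).1 = (g.1 x + g.1 x).1
      simp only [Prod.fst_add]
      rw [hΦ1, hΨ1]
      simp [Prod.fst_add]
    · show ((Φh (Ψh g)).1 x + (Φh (Ψh g)).1 x).2 = (g.1 x + g.1 x).2
      simp only [Prod.snd_add]
      rw [hΦ2, hΨ2]
      simp [Prod.snd_add]
  refine ⟨⟨⟨Φh, Ψh, left, right⟩, fun a b => Φh.map_mul a b⟩, ?_⟩
  intro f x
  rw [hφ, hφ]
  obtain ⟨h1, h2⟩ := hΦ f x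
  rw [two_zsmul, two_zsmul]
  exact Prod.ext h1 h2
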